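/- Suppose α, β₁,…,β_k are positive reals, Y₁,…,Y_k are subsets of [n], and for every s ∈ [n] the sum of β_i over those i with s ∈ Y_i equals α. Then the linear inequality Σ_{i=1}^k β_i x_{Y_i} ≥ α x_{[n]} (as an inequality on vectors x ∈ ℝ^{2^n−1}) is a nonnegative linear combination of (log-form) uniform cover inequalities, i.e. of inequalities of the form Σ_j x_{Z_j} ≥ m x_{[n]} where Z₁,…,Z_r is an m-uniform cover of [n]. -/

import Mathlib

open Finset

/-- Realize a multiplicity vector as a list of indices. -/
lemma exists_index_repeat {k : ℕ} (P : Fin k → ℕ) :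
    ∃ (r : ℕ) (idx : Fin r → Fin k),
      ∀ (M : Type) (_ : AddCommMonoid M) (g : Fin k → M),
        ∑ j, g (idx j) = ∑ i, P i • g i := by
  induction k with
  | zero => exact ⟨0, Fin.elim0, fun M _ g => by simp⟩
  | succ k ih =>
    obtain ⟨r', idx', h'⟩ := ih (fun i => P i.succ)
    refine ⟨P 0 + r', Fin.addCases (fun _ => 0) (fun j => (idx' j).succ), fun M _ g => ?_⟩
    rw [Fin.sum_univ_add]
    simp only [Fin.addCases_left, Fin.addCases_right]
    rw [Fin.sum_univ_succ, Finset.sum_const, card_univ, Fintype.card_fin]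
    rw [h' M _ (fun i => g i.succ)]
open Finset

lemma update_sum_eq {k d : ℕ} (c : Fin d → Fin k → ℚ) (ρ : Fin d → ℝ) (j₀ : Fin d)
    (u : ℝ) (i : Fin k) :
    ∑ j, Function.update ρ j₀ u j * (c j i : ℝ)
      = (∑ j, ρ j * (c j i : ℝ)) + (u - ρ j₀) * (c j₀ i : ℝ) := by
  rw [← Finset.add_sum_erase _ _ (mem_univ j₀), ← Finset.add_sum_erase _ (fun j => ρ j * (c j i:ℝ)) (mem_univ j₀)]
  have : ∑ j ∈ univ.erase j₀, Function.update ρ j₀ u j * (c j i : ℝ)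
      = ∑ j ∈ univ.erase j₀, ρ j * (c j i : ℝ) := by
    refine Finset.sum_congr rfl fun j hj => ?_
    rw [Function.update_of_ne (Finset.mem_erase.1 hj).1]
  rw [this, Function.update_self]
  ring

lemma hypercube {k d : ℕ} (hk : 0 < k) (c : Fin d → Fin k → ℚ) (e : Fin d → ℝ)
    (hpos : ∀ i, 0 < ∑ j, e j * (c j i : ℝ)) :
    ∃ (M : ℕ) (lam : Fin M → ℝ) (r : Fin M → Fin d → ℚ),
      (∀ t, 0 ≤ lam t) ∧
      (∀ t i, (0:ℝ) < ∑ j, (r t j : ℝ) * (c j i : ℝ)) ∧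
      (∀ j, e j = ∑ t, lam t * (r t j : ℝ)) := by
  have key : ∀ T : Finset (Fin d),
      ∃ (ι : Type) (_ : Fintype ι) (lam : ι → ℝ) (ρ : ι → Fin d → ℝ),
        (∀ t, 0 ≤ lam t) ∧ (∀ t j, j ∈ T → ∃ q : ℚ, ρ t j = (q : ℝ)) ∧
        (∀ t i, (0:ℝ) < ∑ j, ρ t j * (c j i : ℝ)) ∧
        (∀ j, e j = ∑ t, lam t * ρ t j) := by
    intro T
    induction T using Finset.induction_on with
    | empty =>
      exact ⟨Fin 1, inferInstance, fun _ => 1, fun _ => e, fun _ => zero_le_one,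
        fun t j hj => absurd hj (notMem_empty j), fun _ => hpos, fun j => by simp⟩
    | @insert j₀ T hj₀ ih =>
      obtain ⟨ι, _, lam, ρ, hlam, hrat, hp, hsum⟩ := ih
      have hchoice : ∀ t : ι, ∃ (u₀ u₁ : ℚ), (u₀ : ℝ) < ρ t j₀ ∧ ρ t j₀ < (u₁ : ℝ) ∧
          (∀ i, (0:ℝ) < ∑ j, Function.update (ρ t) j₀ (u₀:ℝ) j * (c j i : ℝ)) ∧
          (∀ i, (0:ℝ) < ∑ j, Function.update (ρ t) j₀ (u₁:ℝ) j * (c j i : ℝ)) := by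
        intro t
        set δ : ℝ := (univ.inf' (univ_nonempty_iff.2 (Fin.pos_iff_nonempty.1 hk))
          fun i => (∑ j, ρ t j * (c j i : ℝ)) / (|(c j₀ i : ℝ)| + 1)) with hδ
        have hδpos : 0 < δ := by
          rw [hδ, Finset.lt_inf'_iff]
          intro i _
          exact div_pos (hp t i) (by positivity)
        have hgood : ∀ u : ℝ, |u - ρ t j₀| < δ →
            ∀ i, (0:ℝ) < ∑ j, Function.update (ρ t) j₀ u j * (c j i : ℝ) := by
          intro u hu i
          rw [update_sum_eq]
          have h1 : |(u - ρ t j₀) * (c j₀ i : ℝ)| < ∑ j, ρ t j * (c j i : ℝ) := by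
            rw [abs_mul]
            calc |u - ρ t j₀| * |(c j₀ i : ℝ)| ≤ |u - ρ t j₀| * (|(c j₀ i : ℝ)| + 1) := by
                  nlinarith [abs_nonneg (u - ρ t j₀)]
              _ < δ * (|(c j₀ i : ℝ)| + 1) := by
                  have : (0:ℝ) < |(c j₀ i : ℝ)| + 1 := by positivity
                  exact mul_lt_mul_of_pos_right hu this
              _ ≤ ∑ j, ρ t j * (c j i : ℝ) := by
                  have h : δ ≤ (∑ j, ρ t j * (c j i : ℝ)) / (|(c j₀ i : ℝ)| + 1) :=
                    Finset.inf'_le _ (mem_univ i)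
                  rwa [le_div_iff₀ (by positivity)] at h
          have := neg_abs_le ((u - ρ t j₀) * (c j₀ i : ℝ))
          linarith
        obtain ⟨u₀, hu₀1, hu₀2⟩ := exists_rat_btwn (show ρ t j₀ - δ < ρ t j₀ by linarith)
        obtain ⟨u₁, hu₁1, hu₁2⟩ := exists_rat_btwn (show ρ t j₀ < ρ t j₀ + δ by linarith)
        refine ⟨u₀, u₁, hu₀2, hu₁1, hgood _ (by rw [abs_lt]; constructor <;> linarith),
          hgood _ (by rw [abs_lt]; constructor <;> linarith)⟩
      choose u₀ u₁ hu₀ hu₁ hq₀ hq₁ using hchoice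
      set μ : ι → ℝ := fun t => ((u₁ t : ℝ) - ρ t j₀) / ((u₁ t : ℝ) - (u₀ t : ℝ)) with hμ
      have hsub : ∀ t, (0:ℝ) < (u₁ t : ℝ) - (u₀ t : ℝ) := fun t => by
        have := hu₀ t; have := hu₁ t; linarith
      have hμ0 : ∀ t, 0 ≤ μ t := fun t => div_nonneg (by have := hu₁ t; linarith) (le_of_lt (hsub t))
      have hμ1 : ∀ t, μ t ≤ 1 := fun t => by
        rw [hμ, div_le_one (hsub t)]; have := hu₀ t; linarith
      have hmix : ∀ t, μ t * (u₀ t : ℝ) + (1 - μ t) * (u₁ t : ℝ) = ρ t j₀ := by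
        intro t
        have h : μ t * ((u₁ t : ℝ) - (u₀ t : ℝ)) = (u₁ t : ℝ) - ρ t j₀ :=
          div_mul_cancel₀ _ (ne_of_gt (hsub t))
        linear_combination -h
      refine ⟨ι × Bool, inferInstance,
        fun p => if p.2 then lam p.1 * (1 - μ p.1) else lam p.1 * μ p.1,
        fun p => if p.2 then Function.update (ρ p.1) j₀ (u₁ p.1 : ℝ)
                 else Function.update (ρ p.1) j₀ (u₀ p.1 : ℝ),
        ?_, ?_, ?_, ?_⟩
      · rintro ⟨t, b⟩
        cases b <;> simp only [if_true, if_false, Bool.false_eq_true]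
        · exact mul_nonneg (hlam t) (hμ0 t)
        · exact mul_nonneg (hlam t) (by have := hμ1 t; linarith)
      · rintro ⟨t, b⟩ j hj
        rcases Finset.mem_insert.1 hj with rfl | hjT
        · cases b <;> simp only [if_true, if_false, Bool.false_eq_true, Function.update_self]
          · exact ⟨u₀ t, rfl⟩
          · exact ⟨u₁ t, rfl⟩
        · have hne : j ≠ j₀ := fun h => hj₀ (h ▸ hjT)
          obtain ⟨q, hq⟩ := hrat t j hjT
          cases b <;> simp only [if_true, if_false, Bool.false_eq_true,
            Function.update_of_ne hne] <;> exact ⟨q, hq⟩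
      · rintro ⟨t, b⟩ i
        cases b <;> simp only [if_true, if_false, Bool.false_eq_true]
        · exact hq₀ t i
        · exact hq₁ t i
      · intro j
        rw [Fintype.sum_prod_type]
        simp only [Fintype.sum_bool, if_true, if_false, Bool.false_eq_true]
        by_cases hje : j = j₀
        · rw [hje]
          simp only [Function.update_self]
          rw [hsum j₀]
          refine Finset.sum_congr rfl fun t _ => ?_
          rw [← hmix t]
          ring
        · simp only [Function.update_of_ne hje]
          rw [hsum j]
          refine Finset.sum_congr rfl fun t _ => ?_
          ring
  obtain ⟨ι, _, lam, ρ, hlam, hrat, hp, hsum⟩ := key univ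
  have hratall : ∀ t j, ∃ q : ℚ, ρ t j = (q : ℝ) := fun t j => hrat t j (mem_univ j)
  choose q hq using hratall
  refine ⟨Fintype.card ι, fun t => lam ((Fintype.equivFin ι).symm t),
    fun t => q ((Fintype.equivFin ι).symm t), fun t => hlam _, fun t i => ?_, fun j => ?_⟩
  · have := hp ((Fintype.equivFin ι).symm t) i
    simpa only [hq] using this
  · rw [hsum j, ← Equiv.sum_comp (Fintype.equivFin ι).symm (fun t => lam t * ρ t j)]
    refine Finset.sum_congr rfl fun t _ => ?_
    rw [hq]
open Finset

lemma exists_rat_coords {k : ℕ} (γ : Fin k → ℝ) :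
    ∃ (d : ℕ) (e : Fin d → ℝ) (c : Fin d → Fin k → ℚ),
      (∀ i, γ i = ∑ j, e j * (c j i : ℝ)) ∧
      (∀ (F G : Finset (Fin k)), ∑ i ∈ F, γ i = ∑ i ∈ G, γ i →
        ∀ j, ∑ i ∈ F, c j i = ∑ i ∈ G, c j i) := by
  set V : Submodule ℚ ℝ := Submodule.span ℚ (Set.range γ) with hV
  haveI : FiniteDimensional ℚ V := FiniteDimensional.span_of_finite ℚ (Set.finite_range γ)
  set b := Module.finBasis ℚ V with hb
  set d := Module.finrank ℚ V with hd
  have hmem : ∀ i, γ i ∈ V := fun i => Submodule.subset_span (Set.mem_range_self i)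
  set g : Fin k → V := fun i => ⟨γ i, hmem i⟩ with hg
  refine ⟨d, fun j => ((b j : V) : ℝ), fun j i => b.repr (g i) j, fun i => ?_, fun F G hFG j => ?_⟩
  · have h1 : ∑ j, b.repr (g i) j • b j = g i := b.sum_repr (g i)
    have h2 : ((∑ j, b.repr (g i) j • b j : V) : ℝ) = γ i := by rw [h1]
    rw [← h2]
    push_cast [Submodule.coe_sum]
    refine Finset.sum_congr rfl fun j _ => ?_
    rw [Rat.smul_def]
    ring
  · have hsum : ∑ i ∈ F, g i = ∑ i ∈ G, g i := by
      apply Subtype.ext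
      push_cast [Submodule.coe_sum]
      exact hFG
    have := congrArg (fun v => b.repr v j) hsum
    simpa only [map_sum, Finsupp.finset_sum_apply] using this
open Finset

lemma nat_of_den_dvd (a : ℚ) (ha : 0 ≤ a) (D : ℕ) (hdvd : a.den ∣ D) :
    ∃ P : ℕ, (P : ℚ) = a * D := by
  obtain ⟨cc, hc⟩ := hdvd
  refine ⟨a.num.toNat * cc, ?_⟩
  have hden : (a.den : ℚ) ≠ 0 := Nat.cast_ne_zero.2 a.den_nz
  have hmul : (a.num : ℚ) = a * a.den := (div_eq_iff hden).1 (Rat.num_div_den a)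
  have hnum' : (a.num.toNat : ℤ) = a.num := Int.toNat_of_nonneg (Rat.num_nonneg.2 ha)
  have hnum : ((a.num.toNat : ℚ)) = ((a.num : ℚ)) := by exact_mod_cast hnum'
  push_cast [hc]
  rw [hnum, hmul]
  ring

theorem combination_of_uniform_cover_inequalities {n k : ℕ} (hn : 0 < n)
    (α : ℝ) (hα : 0 < α) (β : Fin k → ℝ) (hβ : ∀ i, 0 < β i)
    (Y : Fin k → Finset (Fin n)) (hY : ∀ i, (Y i).Nonempty)
    (hbal : ∀ s : Fin n, ∑ i ∈ Finset.univ.filter (fun i => s ∈ Y i), β i = α) :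
    ∃ (N : ℕ) (c : Fin N → ℝ) (_ : ∀ t, 0 ≤ c t) (m : Fin N → ℕ) (r : Fin N → ℕ)
      (Z : (t : Fin N) → Fin (r t) → Finset (Fin n)) (hZ : ∀ t j, (Z t j).Nonempty),
      (∀ t, ∀ s : Fin n, (Finset.univ.filter fun j => s ∈ Z t j).card = m t) ∧
      ∀ x : {A : Finset (Fin n) // A.Nonempty} → ℝ,
        (∑ i, β i * x ⟨Y i, hY i⟩) -
            α * x ⟨Finset.univ, ⟨⟨0, hn⟩, Finset.mem_univ _⟩⟩ =
          ∑ t, c t * ((∑ j, x ⟨Z t j, hZ t j⟩) -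
            (m t : ℝ) * x ⟨Finset.univ, ⟨⟨0, hn⟩, Finset.mem_univ _⟩⟩) := by
  classical
  rcases Nat.eq_zero_or_pos k with rfl | hk
  · exfalso
    have h := hbal ⟨0, hn⟩
    simp only [Finset.univ_eq_empty, Finset.filter_empty, Finset.sum_empty] at h
    exact absurd h (ne_of_lt hα)
  have hγpos : ∀ i, 0 < β i / α := fun i => div_pos (hβ i) hα
  set γ : Fin k → ℝ := fun i => β i / α with hγ
  have hbalγ : ∀ s : Fin n, ∑ i ∈ Finset.univ.filter (fun i => s ∈ Y i), γ i = 1 := by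
    intro s
    simp only [hγ]
    rw [← Finset.sum_div, hbal s, div_self (ne_of_gt hα)]
  obtain ⟨d, e, c, hdecomp, hrel⟩ := exists_rat_coords γ
  have hlayer : ∀ (s : Fin n) j,
      ∑ i ∈ Finset.univ.filter (fun i => s ∈ Y i), c j i
        = ∑ i ∈ Finset.univ.filter (fun i => (⟨0, hn⟩ : Fin n) ∈ Y i), c j i :=
    fun s j => hrel _ _ (by rw [hbalγ, hbalγ]) j
  have hpos : ∀ i, 0 < ∑ j, e j * (c j i : ℝ) := fun i => by
    rw [← hdecomp i]; exact hγpos i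
  obtain ⟨M, lam, rr, hlam, hqpos, hesum⟩ := hypercube hk c e hpos
  set q : Fin M → Fin k → ℚ := fun t i => ∑ j, rr t j * c j i with hqdef
  have hqcast : ∀ t i, ((q t i : ℚ) : ℝ) = ∑ j, (rr t j : ℝ) * (c j i : ℝ) := by
    intro t i
    simp only [hqdef]
    push_cast
    rfl
  have hq0 : ∀ t i, 0 ≤ q t i := by
    intro t i
    have h := hqpos t i
    rw [← hqcast t i] at h
    exact_mod_cast le_of_lt h
  set a : Fin d → ℚ := fun j =>
    ∑ i ∈ Finset.univ.filter (fun i => (⟨0, hn⟩ : Fin n) ∈ Y i), c j i with ha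
  set μq : Fin M → ℚ := fun t => ∑ j, rr t j * a j with hμqdef
  have hbalq : ∀ t (s : Fin n),
      ∑ i ∈ Finset.univ.filter (fun i => s ∈ Y i), q t i = μq t := by
    intro t s
    simp only [hμqdef, hqdef, ha]
    rw [Finset.sum_comm]
    exact Finset.sum_congr rfl fun j _ => by rw [← Finset.mul_sum, hlayer s j]
  have hμ0 : ∀ t, 0 ≤ μq t := fun t => by
    rw [← hbalq t ⟨0, hn⟩]
    exact Finset.sum_nonneg fun i _ => hq0 t i
  have hγsum : ∀ i, γ i = ∑ t, lam t * ((q t i : ℚ) : ℝ) := by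
    intro i
    rw [hdecomp i]
    calc ∑ j, e j * (c j i : ℝ)
        = ∑ j, (∑ t, lam t * (rr t j : ℝ)) * (c j i : ℝ) :=
          Finset.sum_congr rfl fun j _ => by rw [← hesum j]
      _ = ∑ t, lam t * ((q t i : ℚ) : ℝ) := by
          simp only [Finset.sum_mul]
          rw [Finset.sum_comm]
          refine Finset.sum_congr rfl fun t _ => ?_
          rw [hqcast, Finset.mul_sum]
          exact Finset.sum_congr rfl fun j _ => by ring
  have hone : ∑ t, lam t * ((μq t : ℚ) : ℝ) = 1 := by
    calc ∑ t, lam t * ((μq t : ℚ) : ℝ)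
        = ∑ t, lam t * ∑ i ∈ Finset.univ.filter (fun i => (⟨0, hn⟩ : Fin n) ∈ Y i),
            ((q t i : ℚ) : ℝ) := by
          refine Finset.sum_congr rfl fun t _ => ?_
          rw [← hbalq t ⟨0, hn⟩]
          push_cast
          rfl
      _ = ∑ i ∈ Finset.univ.filter (fun i => (⟨0, hn⟩ : Fin n) ∈ Y i),
            ∑ t, lam t * ((q t i : ℚ) : ℝ) := by
          simp only [Finset.mul_sum]
          rw [Finset.sum_comm]
      _ = ∑ i ∈ Finset.univ.filter (fun i => (⟨0, hn⟩ : Fin n) ∈ Y i), γ i :=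
          Finset.sum_congr rfl fun i _ => (hγsum i).symm
      _ = 1 := hbalγ _
  have hDex : ∀ t, ∃ (D : ℕ) (P : Fin k → ℕ) (mm : ℕ), 0 < D ∧
      (∀ i, (P i : ℚ) = q t i * D) ∧ ((mm : ℚ) = μq t * D) := by
    intro t
    set D := (μq t).den * ∏ i, (q t i).den with hD
    have hDpos : 0 < D := Nat.mul_pos (μq t).den_pos (Finset.prod_pos fun i _ => (q t i).den_pos)
    have hPex : ∀ i, ∃ P : ℕ, (P : ℚ) = q t i * D := fun i =>
      nat_of_den_dvd _ (hq0 t i) _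
        (Dvd.dvd.mul_left (Finset.dvd_prod_of_mem _ (mem_univ i)) _)
    choose P hP using hPex
    obtain ⟨mm, hmm⟩ := nat_of_den_dvd _ (hμ0 t) _ (dvd_mul_right _ _)
    exact ⟨D, P, mm, hDpos, hP, hmm⟩
  choose D P mN hDpos hP hm using hDex
  choose rnum idx hidx using fun t => exists_index_repeat (P t)
  have hPr : ∀ t i, ((P t i : ℕ) : ℝ) = ((q t i : ℚ) : ℝ) * ((D t : ℕ) : ℝ) := by
    intro t i
    have h2 := congrArg (fun z : ℚ => (z : ℝ)) (hP t i)
    push_cast at h2 ⊢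
    exact h2
  have hmr : ∀ t, ((mN t : ℕ) : ℝ) = ((μq t : ℚ) : ℝ) * ((D t : ℕ) : ℝ) := by
    intro t
    have h2 := congrArg (fun z : ℚ => (z : ℝ)) (hm t)
    push_cast at h2 ⊢
    exact h2
  have hDne : ∀ t, ((D t : ℕ) : ℝ) ≠ 0 := fun t =>
    Nat.cast_ne_zero.2 (hDpos t).ne'
  refine ⟨M, fun t => α * lam t / (D t), fun t =>
      div_nonneg (mul_nonneg (le_of_lt hα) (hlam t)) (Nat.cast_nonneg _),
    mN, rnum, fun t j => Y (idx t j), fun t j => hY _, fun t s => ?_, fun x => ?_⟩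
  · rw [Finset.card_filter]
    rw [hidx t ℕ inferInstance (fun i => if s ∈ Y i then 1 else 0)]
    have hstep : ∑ i, P t i • (if s ∈ Y i then 1 else 0)
        = ∑ i ∈ Finset.univ.filter (fun i => s ∈ Y i), P t i := by
      rw [Finset.sum_filter]
      refine Finset.sum_congr rfl fun i _ => ?_
      by_cases h : s ∈ Y i <;> simp [h]
    rw [hstep]
    have hc2 : ((∑ i ∈ Finset.univ.filter (fun i => s ∈ Y i), P t i : ℕ) : ℚ)
        = ((mN t : ℕ) : ℚ) := by
      push_cast
      rw [hm t, ← hbalq t s, Finset.sum_mul]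
      exact Finset.sum_congr rfl fun i _ => hP t i
    exact_mod_cast hc2
  · symm
    have hsumZ : ∀ t, (∑ j, x ⟨Y (idx t j), hY _⟩) = ∑ i, ((P t i : ℕ) : ℝ) * x ⟨Y i, hY i⟩ := by
      intro t
      have h := hidx t ℝ inferInstance (fun i => x ⟨Y i, hY i⟩)
      simpa [nsmul_eq_mul] using h
    calc ∑ t, (α * lam t / (D t : ℕ)) * ((∑ j, x ⟨Y (idx t j), hY _⟩)
            - ((mN t : ℕ) : ℝ) * x ⟨Finset.univ, ⟨⟨0, hn⟩, Finset.mem_univ _⟩⟩)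
        = ∑ t, ((∑ i, (α * lam t * ((q t i : ℚ) : ℝ)) * x ⟨Y i, hY i⟩)
            - (α * lam t * ((μq t : ℚ) : ℝ)) * x ⟨Finset.univ, ⟨⟨0, hn⟩, Finset.mem_univ _⟩⟩) := by
          refine Finset.sum_congr rfl fun t _ => ?_
          rw [hsumZ t, mul_sub, Finset.mul_sum]
          congr 1
          · refine Finset.sum_congr rfl fun i _ => ?_
            rw [hPr t i]
            field_simp [hDne t]
          · rw [hmr t]
            field_simp [hDne t]
      _ = (∑ i, β i * x ⟨Y i, hY i⟩)
            - α * x ⟨Finset.univ, ⟨⟨0, hn⟩, Finset.mem_univ _⟩⟩ := by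
          rw [Finset.sum_sub_distrib]
          congr 1
          · rw [Finset.sum_comm]
            refine Finset.sum_congr rfl fun i _ => ?_
            have hβi : β i = α * γ i := by
              simp only [hγ]
              field_simp
            rw [hβi, hγsum i, Finset.mul_sum, Finset.sum_mul]
            refine Finset.sum_congr rfl fun t _ => ?_
            ring
          · rw [← Finset.sum_mul]
            congr 1
            calc ∑ t, α * lam t * ((μq t : ℚ) : ℝ)
                = α * ∑ t, lam t * ((μq t : ℚ) : ℝ) := by
                  rw [Finset.mul_sum]
                  exact Finset.sum_congr rfl fun t _ => by ring
              _ = α := by rw [hone, mul_one]
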